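/- For every x ∈ K*, dist_K(−∇d(x)) ≤ L_d·‖∇⁺d(x)‖; in particular, since ∇d(x) = −G u(x) − g, the primal infeasibility satisfies dist_K(G u(x) + g) ≤ L_d·‖x⁺ − x‖. -/

import Mathlib

open scoped RealInnerProductSpace

theorem stmt_3 {n p : ℕ}
    (f : EuclideanSpace ℝ (Fin n) → ℝ) (σf : ℝ) (hσf : 0 < σf)
    (hfc : Continuous f) (hfsc : StrongConvexOn Set.univ σf f)
    (U : Set (EuclideanSpace ℝ (Fin n))) (hUne : U.Nonempty) (hUcl : IsClosed U) (hUcv : Convex ℝ U)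
    (G : EuclideanSpace ℝ (Fin n) →L[ℝ] EuclideanSpace ℝ (Fin p)) (hG : G ≠ 0) (g : EuclideanSpace ℝ (Fin p))
    (K : Set (EuclideanSpace ℝ (Fin p))) (hKne : K.Nonempty) (hKcl : IsClosed K) (hKcv : Convex ℝ K)
    (hKcone : ∀ c : ℝ, 0 ≤ c → ∀ v ∈ K, c • v ∈ K)
    (Kstar : Set (EuclideanSpace ℝ (Fin p)))
    (hKstar : Kstar = {x : EuclideanSpace ℝ (Fin p) | ∀ v ∈ K, 0 ≤ ⟪x, v⟫})
    (Lag : EuclideanSpace ℝ (Fin n) → EuclideanSpace ℝ (Fin p) → ℝ)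
    (hLag : ∀ u x, Lag u x = f u + ⟪x, -(G u) - g⟫)
    (uu : EuclideanSpace ℝ (Fin p) → EuclideanSpace ℝ (Fin n))
    (huu : ∀ x : EuclideanSpace ℝ (Fin p), uu x ∈ U ∧ ∀ u ∈ U, Lag (uu x) x ≤ Lag u x)
    (d : EuclideanSpace ℝ (Fin p) → ℝ) (hd : ∀ x, d x = Lag (uu x) x)
    (Ld : ℝ) (hLd : Ld = ‖G‖ ^ 2 / σf)
    (projKs : EuclideanSpace ℝ (Fin p) → EuclideanSpace ℝ (Fin p))
    (hprojKs : ∀ z : EuclideanSpace ℝ (Fin p), projKs z ∈ Kstar ∧ ∀ w ∈ Kstar, ‖z - projKs z‖ ≤ ‖z - w‖)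
    (gmap : EuclideanSpace ℝ (Fin p) → EuclideanSpace ℝ (Fin p))
    (hgmap : ∀ z : EuclideanSpace ℝ (Fin p), gmap z = projKs (z + (1 / Ld) • (-(G (uu z)) - g)) - z)
 :
    ∀ x ∈ Kstar,
      Metric.infDist (-(-(G (uu x)) - g)) K ≤ Ld * ‖gmap x‖ ∧
      Metric.infDist (G (uu x) + g) K ≤
        Ld * ‖projKs (x + (1 / Ld) • (-(G (uu x)) - g)) - x‖ := by
  intro x hx
  have hGnorm : 0 < ‖G‖ := norm_pos_iff.mpr hG
  have hLdpos : 0 < Ld := by rw [hLd]; positivity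
  -- K as a ConvexCone
  set Kc : ConvexCone ℝ (EuclideanSpace ℝ (Fin p)) :=
    { carrier := K
      smul_mem' := fun c hc v hv => hKcone c hc.le v hv
      add_mem' := fun u hu v hv => by
        have h2 : (2 : ℝ) • ((1/2 : ℝ) • u + (1/2 : ℝ) • v) ∈ K := by
          refine hKcone 2 (by norm_num) _ ?_
          exact hKcv hu hv (by norm_num) (by norm_num) (by norm_num)
        simpa [smul_add, smul_smul] using h2 } with hKc
  have hKcoe : (Kc : Set (EuclideanSpace ℝ (Fin p))) = K := rfl
  -- Kstar is the inner dual cone of K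
  have hKsdual : Kstar = ((ProperCone.innerDual K : ProperCone ℝ _) :
      Set (EuclideanSpace ℝ (Fin p))) := by
    ext w
    rw [hKstar]
    simp only [Set.mem_setOf_eq, SetLike.mem_coe, ProperCone.mem_innerDual]
    constructor
    · intro h v hv; rw [real_inner_comm]; exact h v hv
    · intro h v hv; rw [real_inner_comm]; exact h hv
  have hKsconv : Convex ℝ Kstar := by rw [hKsdual]; exact PointedCone.convex (ProperCone.innerDual K).toSubmodule
  -- setup
  set y : EuclideanSpace ℝ (Fin p) := -(G (uu x)) - g with hy
  set z : EuclideanSpace ℝ (Fin p) := x + (1 / Ld) • y with hz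
  set q : EuclideanSpace ℝ (Fin p) := projKs z with hq
  have hqmem : q ∈ Kstar := (hprojKs z).1
  -- variational inequality
  haveI : Nonempty Kstar := ⟨⟨q, hqmem⟩⟩
  have hmin : ‖z - q‖ = ⨅ w : Kstar, ‖z - w‖ := by
    refine le_antisymm (le_ciInf fun w => (hprojKs z).2 w w.2) ?_
    exact ciInf_le ⟨0, fun _ ⟨_, h⟩ => h ▸ norm_nonneg _⟩ (⟨q, hqmem⟩ : Kstar)
  have hvar : ∀ w ∈ Kstar, ⟪z - q, w - q⟫ ≤ 0 :=
    (norm_eq_iInf_iff_real_inner_le_zero hKsconv hqmem).mp hmin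
  -- Kstar is a cone containing 0
  have hKs0 : (0 : EuclideanSpace ℝ (Fin p)) ∈ Kstar := by
    rw [hKstar]; intro v hv; simp
  have hKs2q : (2 : ℝ) • q ∈ Kstar := by
    rw [hKstar] at hqmem ⊢
    intro v hv
    rw [real_inner_smul_left]
    have := hqmem v hv
    linarith
  have hinner0 : ⟪z - q, q⟫ = 0 := by
    have h1 := hvar 0 hKs0
    have h2 := hvar ((2 : ℝ) • q) hKs2q
    rw [zero_sub, inner_neg_right] at h1
    have h2' : ⟪z - q, q⟫ ≤ 0 := by
      have : (2 : ℝ) • q - q = q := by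
        rw [two_smul]; abel
      rwa [this] at h2
    linarith
  have hzq : ∀ w ∈ Kstar, ⟪z - q, w⟫ ≤ 0 := by
    intro w hw
    have := hvar w hw
    rw [inner_sub_right, hinner0, sub_zero] at this
    exact this
  -- bipolar: q - z ∈ K
  have hqzK : q - z ∈ K := by
    have hbp := ProperCone.innerDual_innerDual (E := EuclideanSpace ℝ (Fin p))
      ⟨Kc.toPointedCone (by
        obtain ⟨v, hv⟩ := hKne
        show (0 : EuclideanSpace ℝ (Fin p)) ∈ K
        simpa using hKcone 0 le_rfl v hv), hKcl⟩
    have : q - z ∈ ProperCone.innerDual (ProperCone.innerDual K : Set (EuclideanSpace ℝ (Fin p))) := by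
      rw [ProperCone.mem_innerDual]
      intro w hw
      have hwKs : w ∈ Kstar := by rw [hKsdual]; exact hw
      have := hzq w hwKs
      rw [real_inner_comm]
      rw [show q - z = -(z - q) by abel, inner_neg_left]
      linarith
    exact (SetLike.ext_iff.mp hbp (q - z)).mp this
  -- the key element in K
  have hcmem : Ld • (q - z) ∈ K := hKcone Ld hLdpos.le _ hqzK
  -- -y = Ld • (x - z)
  have hyeq : -y = Ld • (x - z) := by
    rw [hz]
    rw [show x - (x + (1 / Ld) • y) = -((1 / Ld) • y) by abel]
    rw [smul_neg, smul_smul]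
    field_simp
    rw [one_smul]
  have hdiff : -y - Ld • (q - z) = Ld • (x - q) := by
    rw [hyeq, ← smul_sub]
    congr 1
    abel
  have hmain : Metric.infDist (-y) K ≤ Ld * ‖q - x‖ := by
    calc Metric.infDist (-y) K ≤ dist (-y) (Ld • (q - z)) := Metric.infDist_le_dist_of_mem hcmem
      _ = ‖-y - Ld • (q - z)‖ := by rw [dist_eq_norm]
      _ = ‖Ld • (x - q)‖ := by rw [hdiff]
      _ = Ld * ‖x - q‖ := by rw [norm_smul, Real.norm_eq_abs, abs_of_pos hLdpos]
      _ = Ld * ‖q - x‖ := by rw [norm_sub_rev]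
  have hgx : gmap x = q - x := by rw [hgmap x]
  constructor
  · rw [hgx]; exact hmain
  · have : G (uu x) + g = -y := by rw [hy]; abel
    rw [this]; exact hmain
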